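/- Let p be an odd prime, γ a nonempty p̄-core, and w ≥ 2. Define λ_0^(w) with part set X_γ ∪ {pw} and λ_0^(w−1) with part set X_γ ∪ {p(w−1)}. Then the ratio of products of unmixed bar lengths satisfies H̄_u(λ_0^(w))/H̄_u(λ_0^(w−1)) = pw · ∏_{1 ≤ j ≤ p−1} |p(w−1) − e_j|, where e_j is the largest part of γ congruent to j mod p if one exists, and e_j = j − p otherwise. -/

import Mathlib

open Finset Nat

/-- The multiset of unmixed bar lengths (types 1 and 2) of a bar partition with
part set `X`: values `y - x` over pairs `0 ≤ x < y` with `x ∉ X`, `y ∈ X`. -/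
def unmixedBars (X : Finset ℕ) : Multiset ℕ :=
  X.val.bind fun y => (((Finset.range y).filter (fun x => x ∉ X)).val.map (fun x => y - x))

/-- The multiset of mixed bar lengths (type 3): `a + b` over pairs of parts `b < a`. -/
def mixedBars (X : Finset ℕ) : Multiset ℕ :=
  ((X ×ˢ X).filter (fun q => q.1 < q.2)).val.map (fun q => q.1 + q.2)

/-- The multiset of all bar lengths of the bar partition with part set `X`. -/
def barLengths (X : Finset ℕ) : Multiset ℕ := unmixedBars X + mixedBars X

/-- The product of all bar lengths. -/
def barProd (X : Finset ℕ) : ℕ := (barLengths X).prod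

/-- A bar partition is a `p̄`-core if it has no bar of length divisible by `p`. -/
def IsBarCore (p : ℕ) (X : Finset ℕ) : Prop := ∀ l ∈ barLengths X, ¬ p ∣ l

/-- The `p̄`-weight: the number of bars of length divisible by `p`. -/
def barWeight (p : ℕ) (X : Finset ℕ) : ℕ := ((barLengths X).filter (p ∣ ·)).card

/-- One step of removing a bar of length divisible by `p` from the bar partition
with part set `X`. -/
inductive PBarStep (p : ℕ) : Finset ℕ → Finset ℕ → Prop
  | unmixed (X : Finset ℕ) (x y : ℕ) (hxy : x < y) (hy : y ∈ X) (hx : x ∉ X)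
      (hdvd : p ∣ (y - x)) : PBarStep p X ((insert x (X.erase y)).erase 0)
  | mixed (X : Finset ℕ) (a b : ℕ) (ha : a ∈ X) (hb : b ∈ X) (hba : b < a)
      (hdvd : p ∣ (a + b)) : PBarStep p X ((X.erase a).erase b)

/-- For a nonempty `p̄`-core `γ` and `w ≥ 2`, the ratio of products of unmixed
bar lengths of `λ₀⁽ʷ⁾` and `λ₀⁽ʷ⁻¹⁾` is `pw · ∏_{1 ≤ j ≤ p-1} |p(w-1) - e_j|`,
where `e_j` is the largest part of `γ` in class `j` mod `p`, or `j - p` if none. -/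
-- helpers
private lemma mod_lt_step {p a b : ℕ} (hp : 0 < p) (h : a % p = b % p) (hab : b < a) :
    b + p ≤ a := by
  have hd : p ∣ a - b := (Nat.modEq_iff_dvd' hab.le).mp (Nat.ModEq.symm h)
  have := Nat.le_of_dvd (by omega) hd
  omega

private lemma sub_p_mod {p a : ℕ} (h : p ≤ a) : (a - p) % p = a % p := by
  conv_rhs => rw [← Nat.sub_add_cancel h]
  rw [Nat.add_mod_right]

private lemma mem_unmixed {X : Finset ℕ} {x y : ℕ} (hy : y ∈ X) (hx : x ∉ X)
    (hxy : x < y) : y - x ∈ barLengths X := by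
  unfold barLengths unmixedBars
  rw [Multiset.mem_add]
  left
  rw [Multiset.mem_bind]
  exact ⟨y, hy, Multiset.mem_map.mpr ⟨x, by simp [Finset.mem_filter, Finset.mem_range, hx, hxy], rfl⟩⟩

private lemma core_not_dvd {p : ℕ} {X : Finset ℕ} (h0 : 0 ∉ X) (hcore : IsBarCore p X) :
    ∀ a ∈ X, a % p ≠ 0 := by
  intro a ha h
  have hpos : 0 < a := by rcases Nat.eq_zero_or_pos a with rfl | h; exact absurd ha h0; assumption
  have hmem : a - 0 ∈ barLengths X := mem_unmixed ha h0 hpos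
  exact hcore _ hmem (by simpa using Nat.dvd_of_mod_eq_zero h)

private lemma core_step {p : ℕ} {X : Finset ℕ} (hp : 0 < p) (hcore : IsBarCore p X) :
    ∀ a ∈ X, p < a → a - p ∈ X := by
  intro a ha hpa
  by_contra hnot
  have hmem : a - (a - p) ∈ barLengths X := mem_unmixed ha hnot (by omega)
  have heq : a - (a - p) = p := by omega
  have hdvd : p ∣ a - (a - p) := by rw [heq]
  exact hcore _ hmem hdvd

private lemma core_down {p : ℕ} {X : Finset ℕ} (hp : 0 < p) (hcore : IsBarCore p X) :
    ∀ a, a ∈ X → ∀ b, b % p = a % p → 0 < b → b ≤ a → b ∈ X := by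
  intro a
  induction a using Nat.strong_induction_on with
  | _ a ih =>
    intro ha b hb hb0 hba
    rcases eq_or_lt_of_le hba with rfl | hlt
    · exact ha
    · have hstep : b + p ≤ a := mod_lt_step hp hb.symm hlt
      have hpa : p < a := by omega
      have ha' : a - p ∈ X := core_step hp hcore a ha hpa
      exact ih (a - p) (by omega) ha' b (by rw [hb, sub_p_mod hpa.le]) hb0 (by omega)

private lemma peel1 {p j m : ℕ} (hp : 0 < p) (hj : j < p) (hm : m % p = 0) :
    ∏ x ∈ (Finset.range (m + p)).filter (fun x => x % p = j), (m + p - x)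
      = (m + p - j) * ∏ x ∈ (Finset.range m).filter (fun x => x % p = j), (m - x) := by
  have hjmem : j ∈ (Finset.range (m + p)).filter (fun x => x % p = j) := by
    simp only [Finset.mem_filter, Finset.mem_range]
    exact ⟨by omega, Nat.mod_eq_of_lt hj⟩
  rw [← Finset.mul_prod_erase _ _ hjmem]
  congr 1
  have hset : ((Finset.range (m + p)).filter (fun x => x % p = j)).erase j
      = ((Finset.range m).filter (fun x => x % p = j)).image (· + p) := by
    ext x
    simp only [Finset.mem_erase, Finset.mem_filter, Finset.mem_range, Finset.mem_image]
    constructor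
    · rintro ⟨hxj, hxlt, hxm⟩
      have hjx : j < x := lt_of_le_of_ne (hxm ▸ Nat.mod_le x p) (fun h => hxj h.symm)
      have hge : j + p ≤ x := mod_lt_step hp (by rw [hxm, Nat.mod_eq_of_lt hj]) hjx
      exact ⟨x - p, ⟨by omega, by rw [sub_p_mod (by omega)]; exact hxm⟩, by omega⟩
    · rintro ⟨a, ⟨ham, haj⟩, rfl⟩
      exact ⟨by omega, by omega, by rw [Nat.add_mod_right]; exact haj⟩
  rw [hset, Finset.prod_image (by intro a _ b _ h; simp only at h; omega)]
  exact Finset.prod_congr rfl (fun x _ => by omega)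

private lemma peel2 {p j m n : ℕ} (hp : 0 < p) (hn : n % p = j) (hnm : n < m) (hm : m % p = 0) :
    ∏ x ∈ (Finset.range (m + p)).filter (fun x => x % p = j ∧ n < x), (m + p - x)
      = (m - n) * ∏ x ∈ (Finset.range m).filter (fun x => x % p = j ∧ n < x), (m - x) := by
  have hmem : n + p ∈ (Finset.range (m + p)).filter (fun x => x % p = j ∧ n < x) := by
    simp only [Finset.mem_filter, Finset.mem_range]
    exact ⟨by omega, by rw [Nat.add_mod_right]; exact hn, by omega⟩
  rw [← Finset.mul_prod_erase _ _ hmem]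
  have hfac : m + p - (n + p) = m - n := by omega
  rw [hfac]
  congr 1
  have hset : ((Finset.range (m + p)).filter (fun x => x % p = j ∧ n < x)).erase (n + p)
      = ((Finset.range m).filter (fun x => x % p = j ∧ n < x)).image (· + p) := by
    ext x
    simp only [Finset.mem_erase, Finset.mem_filter, Finset.mem_range, Finset.mem_image]
    constructor
    · rintro ⟨hxne, hxlt, hxm, hnx⟩
      have h1 : n + p ≤ x := mod_lt_step hp (by rw [hxm, hn]) hnx
      have h2 : (n + p) + p ≤ x :=
        mod_lt_step hp (by rw [hxm, Nat.add_mod_right, hn]) (by omega)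
      exact ⟨x - p, ⟨by omega, by rw [sub_p_mod (by omega)]; exact hxm, by omega⟩, by omega⟩
    · rintro ⟨a, ⟨ham, haj, hna⟩, rfl⟩
      exact ⟨by omega, by omega, by rw [Nat.add_mod_right]; exact haj, by omega⟩
  rw [hset, Finset.prod_image (by intro a _ b _ h; simp only at h; omega)]
  exact Finset.prod_congr rfl (fun x _ => by omega)

private lemma peel3 {p j m n : ℕ} (hp : 0 < p) (hn : n % p = j) (hmn : m < n) (hm : m % p = 0) :
    ∏ y ∈ (Finset.range (n + 1)).filter (fun y => y % p = j ∧ m < y), (y - m)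
      = (n - m) * ∏ y ∈ (Finset.range (n + 1)).filter (fun y => y % p = j ∧ m + p < y),
          (y - (m + p)) := by
  have hmem : n ∈ (Finset.range (n + 1)).filter (fun y => y % p = j ∧ m < y) := by
    simp only [Finset.mem_filter, Finset.mem_range]
    exact ⟨by omega, hn, hmn⟩
  rw [← Finset.mul_prod_erase _ _ hmem]
  congr 1
  have hset : (Finset.range (n + 1)).filter (fun y => y % p = j ∧ m + p < y)
      = (((Finset.range (n + 1)).filter (fun y => y % p = j ∧ m < y)).erase n).image (· + p) := by
    ext y
    simp only [Finset.mem_erase, Finset.mem_filter, Finset.mem_range, Finset.mem_image]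
    constructor
    · rintro ⟨hylt, hyj, hmy⟩
      have hyn : y ≤ n := by omega
      have hyp : p ≤ y := by omega
      refine ⟨y - p, ⟨?_, by omega, by rw [sub_p_mod hyp]; exact hyj, by omega⟩, by omega⟩
      -- y - p ≠ n
      omega
    · rintro ⟨a, ⟨hane, halt, haj, hma⟩, rfl⟩
      have : a + p ≤ n := mod_lt_step hp (by rw [hn, haj]) (by omega)
      exact ⟨by omega, by rw [Nat.add_mod_right]; exact haj, by omega⟩
  rw [hset, Finset.prod_image (by intro a _ b _ h; simp only at h; omega)]
  exact Finset.prod_congr rfl (fun x _ => by omega)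

private def Afun (X : Finset ℕ) (M : ℕ) : ℕ :=
  ∏ x ∈ (Finset.range M).filter (fun x => x ∉ X), (M - x)

private def Efun (X : Finset ℕ) (M : ℕ) : ℕ :=
  ∏ y ∈ X.filter (fun y => M < y), (y - M)

private def Bfun (X : Finset ℕ) : ℕ :=
  ∏ y ∈ X, ∏ x ∈ (Finset.range y).filter (fun x => x ∉ X), (y - x)

private lemma unmixed_prod (X' : Finset ℕ) :
    (unmixedBars X').prod = ∏ y ∈ X', ∏ x ∈ (Finset.range y).filter (fun x => x ∉ X'), (y - x) := by
  unfold unmixedBars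
  rw [Multiset.prod_bind]
  rfl

private lemma Efun_pos (X : Finset ℕ) (M : ℕ) : 0 < Efun X M := by
  unfold Efun
  apply Finset.prod_pos
  intro y hy
  have := (Finset.mem_filter.mp hy).2
  omega

private lemma prodInsert {X : Finset ℕ} {M : ℕ} (hM : M ∉ X) :
    (unmixedBars (insert M X)).prod * Efun X M = Afun X M * Bfun X := by
  rw [unmixed_prod, Finset.prod_insert hM]
  have h1 : (Finset.range M).filter (fun x => x ∉ insert M X)
      = (Finset.range M).filter (fun x => x ∉ X) := by
    apply Finset.filter_congr
    intro x hx
    simp only [Finset.mem_range] at hx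
    simp only [Finset.mem_insert]
    constructor
    · intro h hx'; exact h (Or.inr hx')
    · intro h h'; rcases h' with rfl | h'; omega; exact h h'
  have h2 : ∀ y, (Finset.range y).filter (fun x => x ∉ insert M X)
      = ((Finset.range y).filter (fun x => x ∉ X)).erase M := by
    intro y
    ext x
    simp only [Finset.mem_erase, Finset.mem_filter, Finset.mem_range, Finset.mem_insert]
    constructor
    · rintro ⟨hx, hni⟩
      exact ⟨fun h => hni (Or.inl h), hx, fun h => hni (Or.inr h)⟩
    · rintro ⟨hne, hx, hnX⟩
      exact ⟨hx, fun h => by rcases h with rfl | h; exact hne rfl; exact hnX h⟩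
  rw [h1]
  unfold Afun Bfun Efun
  rw [mul_assoc]
  congr 1
  rw [Finset.prod_filter, ← Finset.prod_mul_distrib]
  apply Finset.prod_congr rfl
  intro y hy
  rw [h2 y]
  by_cases hMy : M < y
  · have hMmem : M ∈ (Finset.range y).filter (fun x => x ∉ X) := by
      simp only [Finset.mem_filter, Finset.mem_range]; exact ⟨hMy, hM⟩
    rw [if_pos hMy, mul_comm, Finset.mul_prod_erase _ _ hMmem]
  · rw [if_neg hMy, mul_one, Finset.erase_eq_of_notMem]
    simp only [Finset.mem_filter, Finset.mem_range]
    intro h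
    exact hMy h.1

private def Ajf (p : ℕ) (X : Finset ℕ) (j M : ℕ) : ℕ :=
  ∏ x ∈ ((Finset.range M).filter (fun x => x ∉ X)).filter (fun x => x % p = j), (M - x)

private def Ejf (p : ℕ) (X : Finset ℕ) (j M : ℕ) : ℕ :=
  ∏ y ∈ (X.filter (fun y => M < y)).filter (fun y => y % p = j), (y - M)

private lemma Afun_fiber {p : ℕ} (hp : 0 < p) (X : Finset ℕ) (M : ℕ) :
    Afun X M = ∏ j ∈ Finset.range p, Ajf p X j M :=
  (Finset.prod_fiberwise_of_maps_to (fun x _ => Finset.mem_range.mpr (Nat.mod_lt x hp)) _).symm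

private lemma Efun_fiber {p : ℕ} (hp : 0 < p) (X : Finset ℕ) (M : ℕ) :
    Efun X M = ∏ j ∈ Finset.range p, Ejf p X j M :=
  (Finset.prod_fiberwise_of_maps_to (fun x _ => Finset.mem_range.mpr (Nat.mod_lt x hp)) _).symm

private lemma classId {p : ℕ} {X : Finset ℕ} (hp : 0 < p)
    (hX0 : ∀ a ∈ X, a % p ≠ 0)
    (hdown : ∀ a, a ∈ X → ∀ b, b % p = a % p → 0 < b → b ≤ a → b ∈ X)
    {j m : ℕ} (hj : j < p) (hm : m % p = 0) :
    Ajf p X j (m + p) * Ejf p X j m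
      = Ajf p X j m * Ejf p X j (m + p)
        * ((m : ℤ) - (if (X.filter (fun a => a % p = j)).Nonempty
            then (((X.filter (fun a => a % p = j)).sup id : ℕ) : ℤ)
            else (j : ℤ) - p)).natAbs := by
  by_cases hne : (X.filter (fun a => a % p = j)).Nonempty
  · rw [if_pos hne]
    obtain ⟨b, hb, hbs⟩ := Finset.exists_mem_eq_sup _ hne id
    set n := (X.filter (fun a => a % p = j)).sup id with hns
    have hbX := Finset.mem_filter.mp hb
    have hnX : n ∈ X := by rw [hbs]; exact hbX.1
    have hnj : n % p = j := by rw [hbs]; exact hbX.2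
    have hj0 : j ≠ 0 := fun h => hX0 n hnX (h ▸ hnj)
    have hXcl : ∀ x, (x ∈ X ∧ x % p = j) ↔ (x % p = j ∧ x ≤ n) := by
      intro x
      constructor
      · rintro ⟨hx, hxp⟩
        exact ⟨hxp, Finset.le_sup (f := id) (Finset.mem_filter.mpr ⟨hx, hxp⟩)⟩
      · rintro ⟨hxp, hxn⟩
        have hx0 : 0 < x := by
          rcases Nat.eq_zero_or_pos x with rfl | h
          · exact absurd (by simpa using hxp.symm) hj0
          · exact h
        exact ⟨hdown n hnX x (hxp.trans hnj.symm) hx0 hxn, hxp⟩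
    have hAset : ∀ M, ((Finset.range M).filter (fun x => x ∉ X)).filter (fun x => x % p = j)
        = (Finset.range M).filter (fun x => x % p = j ∧ n < x) := by
      intro M
      ext x
      simp only [Finset.mem_filter, Finset.mem_range]
      constructor
      · rintro ⟨⟨hxM, hxX⟩, hxj⟩
        refine ⟨hxM, hxj, ?_⟩
        by_contra h
        exact hxX ((hXcl x).mpr ⟨hxj, by omega⟩).1
      · rintro ⟨hxM, hxj, hnx⟩
        refine ⟨⟨hxM, fun hx => ?_⟩, hxj⟩
        have := ((hXcl x).mp ⟨hx, hxj⟩).2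
        omega
    have hEset : ∀ M, (X.filter (fun y => M < y)).filter (fun y => y % p = j)
        = (Finset.range (n + 1)).filter (fun y => y % p = j ∧ M < y) := by
      intro M
      ext y
      simp only [Finset.mem_filter, Finset.mem_range]
      constructor
      · rintro ⟨⟨hyX, hMy⟩, hyj⟩
        have := ((hXcl y).mp ⟨hyX, hyj⟩).2
        exact ⟨by omega, hyj, hMy⟩
      · rintro ⟨hyn, hyj, hMy⟩
        exact ⟨⟨((hXcl y).mpr ⟨hyj, by omega⟩).1, hMy⟩, hyj⟩
    have hnm : n ≠ m := fun h => hj0 (by rw [← hnj, h, hm])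
    unfold Ajf Ejf
    rw [hAset, hAset, hEset, hEset]
    rcases lt_or_gt_of_ne hnm with h | h
    · -- n < m : E-products are empty, use peel2
      have e1 : (Finset.range (n + 1)).filter (fun y => y % p = j ∧ m < y) = ∅ :=
        Finset.filter_false_of_mem (fun y hy => by
          simp only [Finset.mem_range] at hy; rintro ⟨_, h2⟩; omega)
      have e2 : (Finset.range (n + 1)).filter (fun y => y % p = j ∧ m + p < y) = ∅ :=
        Finset.filter_false_of_mem (fun y hy => by
          simp only [Finset.mem_range] at hy; rintro ⟨_, h2⟩; omega)
      rw [e1, e2, peel2 hp hnj h hm]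
      have habs : ((m : ℤ) - (n : ℤ)).natAbs = m - n := by omega
      rw [habs]
      simp [mul_comm]
    · -- m < n : A-products are empty, use peel3
      have a1 : (Finset.range m).filter (fun x => x % p = j ∧ n < x) = ∅ :=
        Finset.filter_false_of_mem (fun x hx => by
          simp only [Finset.mem_range] at hx; rintro ⟨_, h2⟩; omega)
      have a2 : (Finset.range (m + p)).filter (fun x => x % p = j ∧ n < x) = ∅ :=
        Finset.filter_false_of_mem (fun x hx => by
          simp only [Finset.mem_range] at hx
          rintro ⟨h1, h2⟩
          have := mod_lt_step hp (by rw [h1, hnj]) h2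
          omega)
      rw [a1, a2, peel3 hp hnj h hm]
      have habs : ((m : ℤ) - (n : ℤ)).natAbs = n - m := by omega
      rw [habs]
      simp [mul_comm, mul_assoc, mul_left_comm]
  · rw [if_neg hne]
    have hnotX : ∀ x, x % p = j → x ∉ X := by
      intro x hxj hx
      exact hne ⟨x, Finset.mem_filter.mpr ⟨hx, hxj⟩⟩
    have hAset : ∀ M, ((Finset.range M).filter (fun x => x ∉ X)).filter (fun x => x % p = j)
        = (Finset.range M).filter (fun x => x % p = j) := by
      intro M
      ext x
      simp only [Finset.mem_filter, Finset.mem_range]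
      constructor
      · rintro ⟨⟨hxM, _⟩, hxj⟩; exact ⟨hxM, hxj⟩
      · rintro ⟨hxM, hxj⟩; exact ⟨⟨hxM, hnotX x hxj⟩, hxj⟩
    have hEset : ∀ M, (X.filter (fun y => M < y)).filter (fun y => y % p = j) = ∅ := by
      intro M
      apply Finset.filter_false_of_mem
      intro y hy hyj
      exact hnotX y hyj (Finset.mem_filter.mp hy).1
    unfold Ajf Ejf
    rw [hAset, hAset, hEset, hEset, peel1 hp hj hm]
    have habs : ((m : ℤ) - ((j : ℤ) - (p : ℤ))).natAbs = m + p - j := by omega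
    rw [habs]
    simp [mul_comm]

theorem stmt19 (p w : ℕ) (hp : p.Prime) (hodd : Odd p) (X : Finset ℕ)
    (h0 : 0 ∉ X) (hne : X.Nonempty) (hcore : IsBarCore p X) (hw : 2 ≤ w) :
    let e : ℕ → ℤ := fun j =>
      if (X.filter (fun a => a % p = j)).Nonempty
        then (((X.filter (fun a => a % p = j)).sup id : ℕ) : ℤ) else (j : ℤ) - p
    (unmixedBars (insert (p * w) X)).prod
      = (unmixedBars (insert (p * (w - 1)) X)).prod
        * (p * w * ∏ j ∈ Finset.Icc 1 (p - 1),
            (((p * (w - 1) : ℕ) : ℤ) - e j).natAbs) := by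
  intro e
  have he : ∀ j, e j = if (X.filter (fun a => a % p = j)).Nonempty
      then (((X.filter (fun a => a % p = j)).sup id : ℕ) : ℤ) else (j : ℤ) - p :=
    fun _ => rfl
  have hp0 : 0 < p := hp.pos
  have hp2 : 2 ≤ p := hp.two_le
  have hX0 : ∀ a ∈ X, a % p ≠ 0 := core_not_dvd h0 hcore
  have hdown : ∀ a, a ∈ X → ∀ b, b % p = a % p → 0 < b → b ≤ a → b ∈ X :=
    core_down hp0 hcore
  set m := p * (w - 1) with hmdef
  have hmp : p * w = m + p := by
    rw [hmdef, ← Nat.mul_succ]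
    congr 1
    omega
  have hmmod : m % p = 0 := by rw [hmdef]; exact Nat.mul_mod_right _ _
  have hm2mod : (m + p) % p = 0 := by
    rw [Nat.add_mod, hmmod, Nat.mod_self]
    simp
  have hmX : m ∉ X := fun h => hX0 m h hmmod
  have hm2X : (m + p) ∉ X := fun h => hX0 _ h hm2mod
  have h1 := prodInsert (X := X) hm2X
  have h2 := prodInsert (X := X) hmX
  -- the per-class product identity, assembled
  set c : ℕ → ℕ := fun j => ((m : ℤ) - (if (X.filter (fun a => a % p = j)).Nonempty
      then (((X.filter (fun a => a % p = j)).sup id : ℕ) : ℤ)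
      else (j : ℤ) - p)).natAbs with hc
  have h3 : Afun X (m + p) * Efun X m = Afun X m * Efun X (m + p) * ∏ j ∈ Finset.range p, c j := by
    rw [Afun_fiber hp0, Afun_fiber hp0, Efun_fiber hp0, Efun_fiber hp0,
      ← Finset.prod_mul_distrib, ← Finset.prod_mul_distrib, ← Finset.prod_mul_distrib]
    apply Finset.prod_congr rfl
    intro j hj
    exact classId hp0 hX0 hdown (Finset.mem_range.mp hj) hmmod
  -- identify the constant
  have hne0 : ¬ (X.filter (fun a => a % p = 0)).Nonempty := by
    rintro ⟨a, ha⟩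
    have := Finset.mem_filter.mp ha
    exact hX0 a this.1 this.2
  have hc0 : c 0 = m + p := by
    simp only [hc, if_neg hne0]
    omega
  have hK : ∏ j ∈ Finset.range p, c j = (m + p) * ∏ j ∈ Finset.Icc 1 (p - 1), c j := by
    have hrange : Finset.range p = insert 0 (Finset.Icc 1 (p - 1)) := by
      ext j
      simp only [Finset.mem_range, Finset.mem_insert, Finset.mem_Icc]
      omega
    rw [hrange, Finset.prod_insert (by simp), hc0]
  -- cancellation
  have hEpos : 0 < Efun X (m + p) * Efun X m := Nat.mul_pos (Efun_pos X _) (Efun_pos X _)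
  rw [hmp]
  apply Nat.eq_of_mul_eq_mul_right hEpos
  calc (unmixedBars (insert (m + p) X)).prod * (Efun X (m + p) * Efun X m)
      = ((unmixedBars (insert (m + p) X)).prod * Efun X (m + p)) * Efun X m := by ring
    _ = (Afun X (m + p) * Bfun X) * Efun X m := by rw [h1]
    _ = (Afun X (m + p) * Efun X m) * Bfun X := by ring
    _ = (Afun X m * Efun X (m + p) * ∏ j ∈ Finset.range p, c j) * Bfun X := by rw [h3]
    _ = ((unmixedBars (insert m X)).prod * Efun X m) * Efun X (m + p)
          * ∏ j ∈ Finset.range p, c j := by rw [h2]; ring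
    _ = (unmixedBars (insert m X)).prod
          * ((m + p) * ∏ j ∈ Finset.Icc 1 (p - 1), c j)
          * (Efun X (m + p) * Efun X m) := by rw [hK]; ring
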